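/- Let X_i, i ∈ I, be pairwise disjoint and connected binary structures. Then ⋃_{i∈I} X_i is reversible if and only if the following holds: whenever f : I → I is a surjection, g_i is a monomorphism from X_i to X_{f(i)} for each i ∈ I, and for each j ∈ I the family {g_i[X_i] : i ∈ f⁻¹[{j}]} is a partition of X_j, then f is a bijection and each g_i is an isomorphism from X_i onto X_{f(i)}. -/
import Mathlib


universe u v w

section Defs

variable {α : Type*} {β : Type*}

/-- `f` is a homomorphism from `⟨α, r⟩` to `⟨β, s⟩`. -/
def IsHom (r : α → α → Prop) (s : β → β → Prop) (f : α → β) : Prop :=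
  ∀ x y, r x y → s (f x) (f y)

/-- A condensation is a bijective homomorphism. -/
def IsCond (r : α → α → Prop) (s : β → β → Prop) (f : α → β) : Prop :=
  Function.Bijective f ∧ IsHom r s f

/-- A monomorphism is an injective homomorphism. -/
def IsMono (r : α → α → Prop) (s : β → β → Prop) (f : α → β) : Prop :=
  Function.Injective f ∧ IsHom r s f

/-- An isomorphism of binary structures. -/
def IsIso (r : α → α → Prop) (s : β → β → Prop) (f : α → β) : Prop :=
  Function.Bijective f ∧ ∀ x y, r x y ↔ s (f x) (f y)

/-- A binary structure is reversible iff every self-condensation is an automorphism. -/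
def Reversible (r : α → α → Prop) : Prop :=
  ∀ f : α → α, IsCond r r f → IsIso r r f

/-- A binary structure is connected iff it has exactly one component: it is nonempty and
the least equivalence relation containing `r` relates any two points. -/
def Connected (r : α → α → Prop) : Prop :=
  Nonempty α ∧ ∀ x y, Relation.EqvGen r x y

/-- The relation of the disjoint union of the structures `⟨X i, R i⟩`. -/
def unionRel {I : Type*} {X : I → Type*} (R : ∀ i, X i → X i → Prop) :
    (Σ i, X i) → (Σ i, X i) → Prop :=
  fun a b => ∃ h : a.1 = b.1, R b.1 (h ▸ a.2) b.2

end Defs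

lemma sigma_mk_eq {I : Type*} {X : I → Type*} {i j : I} (h : i = j) (a : X i) (b : X j) :
    (⟨i, a⟩ : Σ k, X k) = ⟨j, b⟩ ↔ h ▸ a = b := by subst h; simp

lemma eqvGen_map {α β : Type*} {r : α → α → Prop} {s : β → β → Prop} {f : α → β}
    (hf : IsHom r s f) {x y : α} (h : Relation.EqvGen r x y) :
    Relation.EqvGen s (f x) (f y) := by
  induction h with
  | rel a b h => exact .rel _ _ (hf a b h)
  | refl a => exact .refl _
  | symm a b _ ih => exact .symm _ _ ih
  | trans a b c _ _ ih1 ih2 => exact .trans _ _ _ ih1 ih2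

lemma eqvGen_unionRel_fst {I : Type*} {X : I → Type*} {R : ∀ i, X i → X i → Prop}
    {a b : Σ i, X i} (h : Relation.EqvGen (unionRel R) a b) : a.1 = b.1 := by
  induction h with
  | rel a b h => exact h.1
  | refl => rfl
  | symm _ _ _ ih => exact ih.symm
  | trans _ _ _ _ _ ih1 ih2 => exact ih1.trans ih2

/-- **Theorem (Statement 2).** Let `⟨X i, R i⟩`, `i ∈ I`, be pairwise disjoint (realized by a
sigma type) connected binary structures. Then the disjoint union is reversible iff:
whenever `f : I → I` is a surjection, `g i : X i → X (f i)` are monomorphisms, and for each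
`j ∈ I` the family `{g i [X i] : i ∈ f⁻¹[{j}]}` is a partition of `X j` (the ranges are
pairwise disjoint and cover `X j`; they are non-empty since the `X i` are connected, hence
non-empty), then `f` is a bijection and each `g i` is an isomorphism onto `X (f i)`. -/
theorem stmt2 {I : Type u} {X : I → Type v} (R : ∀ i, X i → X i → Prop)
    (hconn : ∀ i, Connected (R i)) :
    Reversible (unionRel R) ↔
      ∀ (f : I → I) (g : ∀ i, X i → X (f i)),
        Function.Surjective f →
        (∀ i, IsMono (R i) (R (f i)) (g i)) →
        -- the ranges of the `g i`, `i ∈ f⁻¹[{j}]`, are pairwise disjoint …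
        (∀ (j : I) (i₁ i₂ : I) (h₁ : f i₁ = j) (h₂ : f i₂ = j) (x₁ : X i₁) (x₂ : X i₂),
          h₁ ▸ g i₁ x₁ = h₂ ▸ g i₂ x₂ → i₁ = i₂) →
        -- … and cover `X j`, i.e. they form a partition of `X j`
        (∀ (j : I) (y : X j), ∃ (i : I) (h : f i = j) (x : X i), h ▸ g i x = y) →
        Function.Bijective f ∧ ∀ i, IsIso (R i) (R (f i)) (g i) := by
  constructor
  · -- Reversible → RHS
    intro hrev f g hfsurj hgmono hgdisj hgcover
    set F : (Σ i, X i) → Σ i, X i := fun a => ⟨f a.1, g a.1 a.2⟩ with hFdef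
    have hFhom : IsHom (unionRel R) (unionRel R) F := by
      rintro ⟨i, x⟩ ⟨j, y⟩ ⟨h, hr⟩
      dsimp at h
      subst h
      exact ⟨rfl, (hgmono i).2 x y hr⟩
    have hFsurj : Function.Surjective F := by
      rintro ⟨j, y⟩
      obtain ⟨i, h, x, hx⟩ := hgcover j y
      exact ⟨⟨i, x⟩, (sigma_mk_eq h _ _).2 hx⟩
    have hFinj : Function.Injective F := by
      rintro ⟨i₁, x₁⟩ ⟨i₂, x₂⟩ he
      have h : f i₁ = f i₂ := congrArg Sigma.fst he
      have he' : h ▸ g i₁ x₁ = g i₂ x₂ := (sigma_mk_eq h _ _).1 he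
      have hi : i₁ = i₂ := hgdisj (f i₂) i₁ i₂ h rfl x₁ x₂ he'
      subst hi
      have hx : x₁ = x₂ := (hgmono i₁).1 he'
      rw [hx]
    have hFiso : IsIso (unionRel R) (unionRel R) F :=
      hrev F ⟨⟨hFinj, hFsurj⟩, hFhom⟩
    -- key claim for injectivity of f
    have claim : ∀ (j : I) (y y' : X j), Relation.EqvGen (R j) y y' →
        ∀ (i₁ i₂ : I) (h₁ : f i₁ = j) (h₂ : f i₂ = j) (x₁ : X i₁) (x₂ : X i₂),
          h₁ ▸ g i₁ x₁ = y → h₂ ▸ g i₂ x₂ = y' → i₁ = i₂ := by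
      intro j y y' h
      induction h with
      | rel a b hab =>
        intro i₁ i₂ h₁ h₂ x₁ x₂ e₁ e₂
        have e₁' : F ⟨i₁, x₁⟩ = ⟨j, a⟩ := (sigma_mk_eq h₁ _ _).2 e₁
        have e₂' : F ⟨i₂, x₂⟩ = ⟨j, b⟩ := (sigma_mk_eq h₂ _ _).2 e₂
        have hu : unionRel R (F ⟨i₁, x₁⟩) (F ⟨i₂, x₂⟩) := by
          rw [e₁', e₂']; exact ⟨rfl, hab⟩
        have := (hFiso.2 ⟨i₁, x₁⟩ ⟨i₂, x₂⟩).2 hu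
        exact this.1
      | refl a =>
        intro i₁ i₂ h₁ h₂ x₁ x₂ e₁ e₂
        exact hgdisj j i₁ i₂ h₁ h₂ x₁ x₂ (e₁.trans e₂.symm)
      | symm a b _ ih =>
        intro i₁ i₂ h₁ h₂ x₁ x₂ e₁ e₂
        exact (ih i₂ i₁ h₂ h₁ x₂ x₁ e₂ e₁).symm
      | trans a b c _ _ ih1 ih2 =>
        intro i₁ i₂ h₁ h₂ x₁ x₂ e₁ e₂
        obtain ⟨k, hk, xk, ek⟩ := hgcover j b
        exact (ih1 i₁ k h₁ hk x₁ xk e₁ ek).trans (ih2 k i₂ hk h₂ xk x₂ ek e₂)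
    have hfinj : Function.Injective f := by
      intro i₁ i₂ h
      obtain ⟨x₁⟩ := (hconn i₁).1
      obtain ⟨x₂⟩ := (hconn i₂).1
      exact claim (f i₂) (h ▸ g i₁ x₁) (g i₂ x₂)
        ((hconn (f i₂)).2 _ _) i₁ i₂ h rfl x₁ x₂ rfl rfl
    refine ⟨⟨hfinj, hfsurj⟩, fun i => ?_⟩
    have hgsurj : Function.Surjective (g i) := by
      intro y
      obtain ⟨i', h, x, hx⟩ := hgcover (f i) y
      have : i' = i := hfinj h
      subst this
      exact ⟨x, hx⟩
    refine ⟨⟨(hgmono i).1, hgsurj⟩, fun x y => ⟨(hgmono i).2 x y, fun hr => ?_⟩⟩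
    have hu : unionRel R (F ⟨i, x⟩) (F ⟨i, y⟩) := ⟨rfl, hr⟩
    obtain ⟨h, hr'⟩ := (hFiso.2 ⟨i, x⟩ ⟨i, y⟩).2 hu
    exact hr'
  · -- RHS → Reversible
    intro hyp F hF
    obtain ⟨⟨hFinj, hFsurj⟩, hFhom⟩ := hF
    have x₀ : ∀ i, X i := fun i => (hconn i).1.some
    have key : ∀ (i : I) (x : X i), (F ⟨i, x⟩).1 = (F ⟨i, x₀ i⟩).1 := by
      intro i x
      have hι : IsHom (R i) (unionRel R) (fun z : X i => (⟨i, z⟩ : Σ k, X k)) :=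
        fun a b h => ⟨rfl, h⟩
      exact eqvGen_unionRel_fst (eqvGen_map hFhom (eqvGen_map hι ((hconn i).2 x (x₀ i))))
    obtain ⟨f, hf⟩ : ∃ f : I → I, ∀ i, f i = (F ⟨i, x₀ i⟩).1 := ⟨_, fun _ => rfl⟩
    have key' : ∀ (i : I) (x : X i), (F ⟨i, x⟩).1 = f i :=
      fun i x => (key i x).trans (hf i).symm
    obtain ⟨g, FEq⟩ : ∃ g : ∀ i, X i → X (f i), ∀ (i : I) (x : X i), F ⟨i, x⟩ = ⟨f i, g i x⟩ :=
      ⟨fun i x => cast (congrArg X (key' i x)) (F ⟨i, x⟩).2,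
       fun i x => Sigma.ext (key' i x) (cast_heq _ _).symm⟩
    have hfsurj : Function.Surjective f := by
      intro j
      obtain ⟨⟨i, x⟩, hx⟩ := hFsurj ⟨j, x₀ j⟩
      refine ⟨i, ?_⟩
      have := congrArg Sigma.fst hx
      rw [FEq] at hx
      exact (congrArg Sigma.fst hx : f i = j)
    have hgmono : ∀ i, IsMono (R i) (R (f i)) (g i) := by
      intro i
      constructor
      · intro x y hxy
        have : F ⟨i, x⟩ = F ⟨i, y⟩ := by rw [FEq, FEq, hxy]
        have := hFinj this
        exact (sigma_mk_eq rfl x y).1 this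
      · intro x y hr
        have := hFhom ⟨i, x⟩ ⟨i, y⟩ ⟨rfl, hr⟩
        rw [FEq, FEq] at this
        obtain ⟨h, hr'⟩ := this
        exact hr'
    have hgdisj : ∀ (j : I) (i₁ i₂ : I) (h₁ : f i₁ = j) (h₂ : f i₂ = j)
        (x₁ : X i₁) (x₂ : X i₂), h₁ ▸ g i₁ x₁ = h₂ ▸ g i₂ x₂ → i₁ = i₂ := by
      intro j i₁ i₂ h₁ h₂ x₁ x₂ he
      have e₁ : F ⟨i₁, x₁⟩ = ⟨j, h₁ ▸ g i₁ x₁⟩ :=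
        (FEq i₁ x₁).trans ((sigma_mk_eq h₁ _ _).2 rfl)
      have e₂ : F ⟨i₂, x₂⟩ = ⟨j, h₂ ▸ g i₂ x₂⟩ :=
        (FEq i₂ x₂).trans ((sigma_mk_eq h₂ _ _).2 rfl)
      have : F ⟨i₁, x₁⟩ = F ⟨i₂, x₂⟩ := by rw [e₁, e₂, he]
      exact congrArg Sigma.fst (hFinj this)
    have hgcover : ∀ (j : I) (y : X j), ∃ (i : I) (h : f i = j) (x : X i), h ▸ g i x = y := by
      intro j y
      obtain ⟨⟨i, x⟩, hx⟩ := hFsurj ⟨j, y⟩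
      rw [FEq] at hx
      have h : f i = j := congrArg Sigma.fst hx
      exact ⟨i, h, x, (sigma_mk_eq h _ _).1 hx⟩
    obtain ⟨hfbij, hgiso⟩ := hyp f g hfsurj hgmono hgdisj hgcover
    refine ⟨⟨hFinj, hFsurj⟩, ?_⟩
    rintro ⟨i, x⟩ ⟨i', x'⟩
    constructor
    · exact hFhom ⟨i, x⟩ ⟨i', x'⟩
    · intro hu
      rw [FEq, FEq] at hu
      obtain ⟨h, hr⟩ := hu
      have hi : i = i' := hfbij.1 h
      subst hi
      have hr' : R (f i) (g i x) (g i x') := hr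
      exact ⟨rfl, ((hgiso i).2 x x').2 hr'⟩
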